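/- For every q ≥ 1 and r > q, the inclusion ℬ^r ⊊ ℬ^q is proper: the function g(z) = (log(e/(1−z)))^{1/q} (any branch) belongs to ℬ^q but not to ℬ^r. -/

import Mathlib

open MeasureTheory Metric

namespace Stmt13Aux

open Complex

noncomputable def h (z : ℂ) : ℂ := 1 - Complex.log (1 - z)

lemma sub_re_pos {z : ℂ} (hz : ‖z‖ < 1) : 0 < (1 - z).re := by
  have h1 : z.re ≤ ‖z‖ := Complex.re_le_norm z
  simp only [Complex.sub_re, Complex.one_re]
  linarith

lemma sub_ne {z : ℂ} (hz : ‖z‖ < 1) : (1 : ℂ) - z ≠ 0 := by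
  intro h
  have := sub_re_pos hz
  rw [h] at this
  simp at this

lemma sub_slit {z : ℂ} (hz : ‖z‖ < 1) : (1 - z) ∈ Complex.slitPlane :=
  Or.inl (sub_re_pos hz)

lemma h_re_pos {z : ℂ} (hz : ‖z‖ < 1) : 0 < (h z).re := by
  have h1 : ‖1 - z‖ < 2 := by
    calc ‖1 - z‖ ≤ ‖1‖ + ‖z‖ := norm_sub_le 1 z
    _ < 2 := by simp; linarith
  have h2 : Real.log (‖1 - z‖) < 1 := by
    calc Real.log (‖1 - z‖) < Real.log 2 :=
          Real.log_lt_log (norm_pos_iff.mpr (sub_ne hz)) h1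
    _ < 1 := by
          have := Real.log_two_lt_d9; linarith
  simp only [h, Complex.sub_re, Complex.one_re, Complex.log_re]
  linarith

lemma h_slit {z : ℂ} (hz : ‖z‖ < 1) : h z ∈ Complex.slitPlane :=
  Or.inl (h_re_pos hz)

lemma h_ne {z : ℂ} (hz : ‖z‖ < 1) : h z ≠ 0 := by
  intro hh
  have := h_re_pos hz
  rw [hh] at this
  simp at this

lemma h_abs_pos {z : ℂ} (hz : ‖z‖ < 1) : 0 < ‖h z‖ :=
  norm_pos_iff.mpr (h_ne hz)

lemma log_eq {z : ℂ} (hz : ‖z‖ < 1) :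
    Complex.log (Complex.exp 1 / (1 - z)) = h z := by
  have h1 : Complex.exp 1 / (1 - z) = Complex.exp (h z) := by
    rw [h, Complex.exp_sub, Complex.exp_log (sub_ne hz)]
  have harg : |Complex.arg (1 - z)| < Real.pi / 2 :=
    Complex.abs_arg_lt_pi_div_two_iff.2 (Or.inl (sub_re_pos hz))
  have hpi := Real.pi_pos
  have him : (h z).im = -Complex.arg (1 - z) := by
    simp [h, Complex.sub_im, Complex.log_im]
  rw [h1, Complex.log_exp] <;> rw [him] <;> rw [abs_lt] at harg
  · linarith
  · linarith

lemma hasDerivAt_g (c : ℂ) {z : ℂ} (hz : ‖z‖ < 1) :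
    HasDerivAt (fun w => h w ^ c) (c * h z ^ (c - 1) * (1 - z)⁻¹) z := by
  have hd1 : HasDerivAt (fun w : ℂ => 1 - w) (-1) z := (hasDerivAt_id z).const_sub 1
  have hd2 : HasDerivAt (fun w : ℂ => Complex.log (1 - w)) ((1 - z)⁻¹ * -1) z :=
    (Complex.hasDerivAt_log (sub_slit hz)).comp z hd1
  have hd3 : HasDerivAt h ((1 - z)⁻¹) z := by
    have := hd2.const_sub 1
    exact (by simpa using this : HasDerivAt (fun w => 1 - Complex.log (1 - w)) ((1 - z)⁻¹) z)
  exact hd3.cpow_const (h_slit hz)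

lemma abs_cpow_real (w : ℂ) (hw : w ≠ 0) (x : ℝ) :
    ‖w ^ ((x : ℝ) : ℂ)‖ = ‖w‖ ^ x := by
  rw [Complex.norm_cpow_of_ne_zero hw]
  simp

lemma quantity (q s : ℝ) (hq : 0 < q) {z : ℂ} (hz : ‖z‖ < 1) :
    s * ‖(fun w => h w ^ ((1 : ℂ) / (q : ℂ))) z‖ ^ (s - 1) *
      ‖deriv (fun w => h w ^ ((1 : ℂ) / (q : ℂ))) z‖
      = (s / q) * ‖h z‖ ^ (s / q - 1) / ‖1 - z‖ := by
  have hq' : (q : ℂ) ≠ 0 := by exact_mod_cast hq.ne'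
  have hA : 0 < ‖h z‖ := h_abs_pos hz
  have hB : 0 < ‖1 - z‖ := norm_pos_iff.mpr (sub_ne hz)
  have hderiv : deriv (fun w => h w ^ ((1 : ℂ) / (q : ℂ))) z
      = (1 / (q : ℂ)) * h z ^ ((1 : ℂ) / (q : ℂ) - 1) * (1 - z)⁻¹ :=
    (hasDerivAt_g _ hz).deriv
  have hc1 : ((1 : ℂ) / (q : ℂ)) = (((1 / q : ℝ)) : ℂ) := by push_cast; ring
  have hc2 : ((1 : ℂ) / (q : ℂ) - 1) = (((1 / q - 1 : ℝ)) : ℂ) := by push_cast; ring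
  rw [hderiv]
  simp only [norm_mul, norm_inv]
  rw [hc2, hc1, abs_cpow_real _ (h_ne hz), abs_cpow_real _ (h_ne hz)]
  have habs_c : ‖(((1 / q : ℝ)) : ℂ)‖ = 1 / q := by
    rw [Complex.norm_real, Real.norm_eq_abs, abs_of_pos (by positivity)]
  rw [habs_c, ← Real.rpow_mul hA.le]
  set A := ‖h z‖
  set B := ‖1 - z‖
  have key : A ^ (1 / q * (s - 1)) * A ^ (1 / q - 1) = A ^ (s / q - 1) := by
    rw [← Real.rpow_add hA]
    congr 1
    field_simp
    ring
  calc s * A ^ (1 / q * (s - 1)) * (1 / q * A ^ (1 / q - 1) * B⁻¹)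
      = (s / q) * (A ^ (1 / q * (s - 1)) * A ^ (1 / q - 1)) / B := by ring
    _ = (s / q) * A ^ (s / q - 1) / B := by rw [key]

end Stmt13Aux

/-- For `q ≥ 1` and `r > q`, the inclusion `ℬ^r ⊊ ℬ^q` is proper: the branch
`g z = (log(e/(1−z)))^{1/q}` is holomorphic on the disc, has finite `ℬ^q`
seminorm, but infinite `ℬ^r` seminorm. -/
theorem stmt_13 (q r : ℝ) (hq : 1 ≤ q) (hr : q < r) :
    ∃ g : ℂ → ℂ,
      (∀ z ∈ Metric.ball (0:ℂ) 1,
        g z = Complex.log (Complex.exp 1 / (1 - z)) ^ ((1 : ℂ) / (q : ℂ))) ∧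
      DifferentiableOn ℂ g (Metric.ball 0 1) ∧
      (∃ M : ℝ, ∀ z ∈ Metric.ball (0:ℂ) 1,
        (1 - ‖z‖ ^ 2) *
          (q * ‖g z‖ ^ (q - 1) * ‖deriv g z‖) ≤ M) ∧
      ¬ (∃ M : ℝ, ∀ z ∈ Metric.ball (0:ℂ) 1,
        (1 - ‖z‖ ^ 2) *
          (r * ‖g z‖ ^ (r - 1) * ‖deriv g z‖) ≤ M) := by
  have hq0 : (0:ℝ) < q := lt_of_lt_of_le one_pos hq
  have hr0 : (0:ℝ) < r := hq0.trans hr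
  refine ⟨fun z => Stmt13Aux.h z ^ ((1:ℂ)/(q:ℂ)), ?_, ?_, ?_, ?_⟩
  · intro z hz
    rw [mem_ball_zero_iff] at hz
    rw [Stmt13Aux.log_eq hz]
  · intro z hz
    rw [mem_ball_zero_iff] at hz
    exact (Stmt13Aux.hasDerivAt_g _ hz).differentiableAt.differentiableWithinAt
  · refine ⟨2, fun z hz => ?_⟩
    rw [mem_ball_zero_iff] at hz
    rw [Stmt13Aux.quantity q q hq0 hz]
    have hB : 0 < ‖1 - z‖ := norm_pos_iff.mpr (Stmt13Aux.sub_ne hz)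
    have h1 : 1 - ‖z‖ ≤ ‖1 - z‖ := by
      have := norm_sub_norm_le (1:ℂ) z
      simpa using this
    have h0 : 0 ≤ ‖z‖ := norm_nonneg z
    rw [div_self hq0.ne', sub_self, Real.rpow_zero]
    have heq : (1 - ‖z‖ ^ 2) * (1 * 1 / ‖1 - z‖)
        = (1 - ‖z‖ ^ 2) / ‖1 - z‖ := by ring
    rw [heq, div_le_iff₀ hB]
    nlinarith
  · rintro ⟨M, hM⟩
    have hα : 0 < r / q - 1 := by
      rw [sub_pos, lt_div_iff₀ hq0]; linarith
    set α := r / q - 1 with hαdef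
    set s := |M| * q / r + 1 with hsdef
    have hs : 0 < s := by positivity
    set t := s ^ (1 / α) with htdef
    have ht : 0 < t := Real.rpow_pos_of_pos hs _
    have hexp1 : Real.exp (-t) < 1 := Real.exp_lt_one_iff.2 (by linarith)
    have hexp0 : 0 < Real.exp (-t) := Real.exp_pos _
    set ρ : ℝ := 1 - Real.exp (-t) with hρdef
    have hρ0 : 0 ≤ ρ := by rw [hρdef]; linarith
    have hρ1 : ρ < 1 := by rw [hρdef]; linarith
    have hz' : ‖((ρ : ℝ) : ℂ)‖ < 1 := by
      rw [Complex.norm_real, Real.norm_eq_abs, abs_of_nonneg hρ0]; exact hρ1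
    have hzball : ((ρ : ℝ) : ℂ) ∈ Metric.ball (0:ℂ) 1 := by
      rw [mem_ball_zero_iff]; exact hz'
    have hM' := hM _ hzball
    rw [Stmt13Aux.quantity q r hq0 hz'] at hM'
    have e1 : (1 : ℂ) - ((ρ : ℝ) : ℂ) = ((Real.exp (-t) : ℝ) : ℂ) := by
      rw [hρdef]; push_cast; ring
    have e2 : Stmt13Aux.h ((ρ : ℝ) : ℂ) = (((1 + t : ℝ)) : ℂ) := by
      rw [Stmt13Aux.h, e1, ← Complex.ofReal_log hexp0.le, Real.log_exp]
      push_cast; ring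
    rw [e1, e2, Complex.norm_real, Complex.norm_real, Complex.norm_real,
        Real.norm_eq_abs, Real.norm_eq_abs, Real.norm_eq_abs,
        abs_of_pos hexp0, abs_of_pos (by linarith : (0:ℝ) < 1 + t),
        abs_of_nonneg hρ0] at hM'
    have hts : t ^ α = s := by
      rw [htdef, ← Real.rpow_mul hs.le, one_div, inv_mul_cancel₀ hα.ne', Real.rpow_one]
    have hlt : s < (1 + t) ^ α :=
      hts ▸ Real.rpow_lt_rpow ht.le (by linarith) hα
    have h1ρ2 : 1 - ρ ^ 2 = Real.exp (-t) * (1 + ρ) := by rw [hρdef]; ring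
    have hmain : (1 - ρ ^ 2) * (r / q * (1 + t) ^ α / Real.exp (-t))
        = (1 + ρ) * (r / q) * (1 + t) ^ α := by
      rw [h1ρ2]; field_simp
    rw [hmain] at hM'
    have hrq : 0 < r / q := by positivity
    have hXpos : 0 < (1 + t) ^ α := Real.rpow_pos_of_pos (by linarith) α
    have hfin : (r / q) * s ≤ (1 + ρ) * (r / q) * (1 + t) ^ α := by
      nlinarith [mul_lt_mul_of_pos_left hlt hrq,
        mul_nonneg (mul_nonneg hρ0 hrq.le) hXpos.le]
    have hval : (r / q) * s = |M| + r / q := by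
      rw [hsdef]; field_simp
    have := le_abs_self M
    linarith
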